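/- Let p ≥ 0 and let n be an odd integer with n ≥ (2p+2)². Assume further that if n ≡ 3 (mod 6) then p ≡ 1 (mod 3). Then there exists an integer α satisfying 2p+2 ≤ α ≤ n−2−2p, gcd(n, α) = 1, gcd(n, α − 2p − 1) = 1 and gcd(n, n − 1 − α − 2p) = 1. -/

import Mathlib

private lemma split_aux (d : ℕ) : ∀ n : ℕ, 0 < n →
    ∃ a b : ℕ, n = a * b ∧ Nat.Coprime a d ∧ ∀ q : ℕ, q.Prime → q ∣ b → q ∣ d := by
  intro n
  induction n using Nat.strong_induction_on with
  | _ n ih =>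
    intro hn
    by_cases h : Nat.Coprime n d
    · exact ⟨n, 1, (mul_one n).symm, h, fun q hq hqb => absurd (Nat.dvd_one.mp hqb) hq.ne_one⟩
    · obtain ⟨q, hq, hqg⟩ := Nat.exists_prime_and_dvd h
      have hqn : q ∣ n := hqg.trans (Nat.gcd_dvd_left _ _)
      have hqd : q ∣ d := hqg.trans (Nat.gcd_dvd_right _ _)
      have hlt : n / q < n := Nat.div_lt_self hn hq.one_lt
      have hpos : 0 < n / q := Nat.div_pos (Nat.le_of_dvd hn hqn) hq.pos
      obtain ⟨a, b, hab, hca, hb⟩ := ih _ hlt hpos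
      refine ⟨a, b * q, ?_, hca, fun r hr hrb => ?_⟩
      · rw [← mul_assoc, ← hab, Nat.div_mul_cancel hqn]
      · rcases (Nat.Prime.dvd_mul hr).mp hrb with h1 | h2
        · exact hb r hr h1
        · rw [(Nat.prime_dvd_prime_iff_eq hr hq).mp h2]; exact hqd

private lemma int_gcd_one (n : ℕ) (x : ℤ) (hn : 0 < n)
    (h : ∀ q : ℕ, q.Prime → q ∣ n → ¬ (q:ℤ) ∣ x) : Int.gcd (n:ℤ) x = 1 := by
  by_contra hg
  have hgn : ((Int.gcd (n:ℤ) x : ℕ) : ℤ) ∣ (n:ℤ) := Int.gcd_dvd_left _ _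
  have hgn' : Int.gcd (n:ℤ) x ∣ n := by exact_mod_cast hgn
  obtain ⟨q, hq, hqg⟩ := Nat.exists_prime_and_dvd hg
  exact h q hq (hqg.trans hgn')
    ((Int.natCast_dvd_natCast.mpr hqg).trans (Int.gcd_dvd_right _ _))

theorem statement5 (p n : ℕ) (hodd : Odd n) (hn : (2 * p + 2) ^ 2 ≤ n)
    (h63 : n % 6 = 3 → p % 3 = 1) :
    ∃ α : ℤ, 2 * (p : ℤ) + 2 ≤ α ∧ α ≤ (n : ℤ) - 2 - 2 * (p : ℤ) ∧
      Int.gcd (n : ℤ) α = 1 ∧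
      Int.gcd (n : ℤ) (α - 2 * (p : ℤ) - 1) = 1 ∧
      Int.gcd (n : ℤ) ((n : ℤ) - 1 - α - 2 * (p : ℤ)) = 1 := by
  have hnodd : n % 2 = 1 := Nat.odd_iff.mp hodd
  set d := 2 * p + 1 with hd
  obtain ⟨m, hm1, hm2⟩ : ∃ m, p ≤ m ∧ 4 * m + 8 * p + 4 ≤ n := by
    refine ⟨p * p, by nlinarith, ?_⟩
    have : (2 * p + 2) ^ 2 = 4 * (p * p) + 8 * p + 4 := by ring
    omega
  have hn0 : 0 < n := by omega
  have h3d : 3 ∣ n → 3 ∣ d := by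
    intro h3
    obtain ⟨k, hk⟩ := h3
    have h6 : n % 6 = 3 := by omega
    have := h63 h6
    omega
  have hqodd : ∀ q : ℕ, q ∣ n → q ≠ 2 := by
    intro q hq h2
    subst h2
    obtain ⟨k, hk⟩ := hq
    omega
  obtain ⟨e, he⟩ : ∃ e, n = d + 2 * e := ⟨(n - d) / 2, by omega⟩
  by_cases hcop : Nat.Coprime n d
  · -- α = e
    have hnd : ∀ q : ℕ, q.Prime → q ∣ n → q ∣ d → False := by
      intro q hq h1 h2
      have h' := Nat.Coprime.coprime_dvd_left h1 hcop
      rw [Nat.Coprime, Nat.gcd_eq_left h2] at h'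
      exact hq.ne_one h'
    refine ⟨(e : ℤ), by push_cast; omega, by push_cast; omega, ?_, ?_, ?_⟩
    · apply int_gcd_one _ _ hn0
      intro q hq hqn hdvd
      have hqe : q ∣ e := by exact_mod_cast hdvd
      have hqd : q ∣ d := by
        have h1 : q ∣ 2 * e := hqe.mul_left 2
        have h2 := Nat.dvd_sub hqn h1
        rwa [show n - 2 * e = d by omega] at h2
      exact hnd q hq hqn hqd
    · apply int_gcd_one _ _ hn0
      intro q hq hqn hdvd
      have hq2 := hqodd q hqn
      have hN : (q:ℤ) ∣ (n:ℤ) := Int.natCast_dvd_natCast.mpr hqn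
      have h2x : (q:ℤ) ∣ 2 * ((e:ℤ) - 2 * p - 1) := hdvd.mul_left 2
      have h3 : (q:ℤ) ∣ ((3 * d : ℕ) : ℤ) := by
        have heq : ((3 * d : ℕ) : ℤ) = (n:ℤ) - 2 * ((e:ℤ) - 2 * p - 1) := by
          push_cast
          omega
        rw [heq]
        exact dvd_sub hN h2x
      have h3' : q ∣ 3 * d := by exact_mod_cast h3
      rcases (Nat.Prime.dvd_mul hq).mp h3' with h | h
      · have hq3 : q = 3 := (Nat.prime_dvd_prime_iff_eq hq Nat.prime_three).mp h
        subst hq3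
        exact hnd 3 hq hqn (h3d hqn)
      · exact hnd q hq hqn h
    · apply int_gcd_one _ _ hn0
      intro q hq hqn hdvd
      have hN : (q:ℤ) ∣ (n:ℤ) := Int.natCast_dvd_natCast.mpr hqn
      have h2x : (q:ℤ) ∣ 2 * ((n:ℤ) - 1 - (e:ℤ) - 2 * p) := hdvd.mul_left 2
      have hDd : (q:ℤ) ∣ ((d : ℕ) : ℤ) := by
        have heq : ((d : ℕ) : ℤ) = (n:ℤ) - 2 * ((n:ℤ) - 1 - (e:ℤ) - 2 * p) := by
          push_cast
          omega
        rw [heq]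
        exact dvd_sub hN h2x
      have hqd : q ∣ d := by exact_mod_cast hDd
      exact hnd q hq hqn hqd
  · -- α = e + a
    obtain ⟨a, b, hab, hca, hb⟩ := split_aux d n hn0
    have hcad : ∀ q : ℕ, q.Prime → q ∣ a → q ∣ d → False := by
      intro q hq h1 h2
      have h' := Nat.Coprime.coprime_dvd_left h1 hca
      rw [Nat.Coprime, Nat.gcd_eq_left h2] at h'
      exact hq.ne_one h'
    have hp1 : 1 ≤ p := by
      by_contra hp0
      have : d = 1 := by omega
      exact hcop (by rw [this]; exact Nat.coprime_one_right n)
    obtain ⟨q0, hq0, hq0g⟩ := Nat.exists_prime_and_dvd hcop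
    have hq0n : q0 ∣ n := hq0g.trans (Nat.gcd_dvd_left _ _)
    have hq0d : q0 ∣ d := hq0g.trans (Nat.gcd_dvd_right _ _)
    have hq0b : q0 ∣ b := by
      rcases (Nat.Prime.dvd_mul hq0).mp (hab ▸ hq0n) with h | h
      · exact absurd hq0d (fun hh => hcad q0 hq0 h hh)
      · exact h
    have hb0 : 0 < b := Nat.pos_of_ne_zero (by rintro rfl; simp at hab; omega)
    have hb3 : 3 ≤ b := by
      have h1 := hqodd q0 hq0n
      have h2 := Nat.le_of_dvd hb0 hq0b
      have h3 := hq0.two_le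
      omega
    have ha3 : 3 * a ≤ n := by
      calc 3 * a ≤ b * a := Nat.mul_le_mul_right a hb3
        _ = n := by rw [mul_comm, ← hab]
    -- prime dichotomy for n
    have hsplit : ∀ q : ℕ, q.Prime → q ∣ n → (q ∣ a ∧ ¬ q ∣ d) ∨ q ∣ d := by
      intro q hq hqn
      rcases (Nat.Prime.dvd_mul hq).mp (hab ▸ hqn) with h | h
      · by_cases hqd : q ∣ d
        · exact Or.inr hqd
        · exact Or.inl ⟨h, hqd⟩
      · exact Or.inr (hb q hq h)
    have hn36 : 6 * p + 9 ≤ n := by omega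
    have hub : e + a + 2 * p + 2 ≤ n := by omega
    refine ⟨((e + a : ℕ) : ℤ), by push_cast; omega, by push_cast; omega, ?_, ?_, ?_⟩
    · apply int_gcd_one _ _ hn0
      intro q hq hqn hdvd
      have hq2 := hqodd q hqn
      have hqea : q ∣ e + a := by exact_mod_cast hdvd
      rcases hsplit q hq hqn with ⟨hqa, hqd⟩ | hqd
      · -- q ∣ a : then q ∣ e, then q ∣ d : contra
        have hqe : q ∣ e := (Nat.dvd_add_right hqa).mp (by rwa [add_comm] at hqea)
        have : q ∣ d := by
          have h1 := Nat.dvd_sub hqn (hqe.mul_left 2)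
          rwa [show n - 2 * e = d by omega] at h1
        exact hqd this
      · -- q ∣ d : then q ∣ 2e so q ∣ e so q ∣ a : contra with coprime a d
        have hq2e : q ∣ 2 * e := by
          have h1 := Nat.dvd_sub hqn hqd
          rwa [show n - d = 2 * e by omega] at h1
        have hqe : q ∣ e := (Nat.Coprime.dvd_of_dvd_mul_left
          (hq.coprime_iff_not_dvd.mpr (fun h => by
            have := Nat.le_of_dvd (by norm_num) h
            have := hq.two_le
            omega)) hq2e)
        have hqa : q ∣ a := (Nat.dvd_add_right hqe).mp hqea
        exact hcad q hq hqa hqd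
    · apply int_gcd_one _ _ hn0
      intro q hq hqn hdvd
      have hq2 := hqodd q hqn
      have hN : (q:ℤ) ∣ (n:ℤ) := Int.natCast_dvd_natCast.mpr hqn
      have h2x : (q:ℤ) ∣ 2 * (((e + a : ℕ) : ℤ) - 2 * p - 1) := hdvd.mul_left 2
      rcases hsplit q hq hqn with ⟨hqa, hqd⟩ | hqd
      · have hA : (q:ℤ) ∣ ((a:ℕ):ℤ) := Int.natCast_dvd_natCast.mpr hqa
        have h3 : (q:ℤ) ∣ ((3 * d : ℕ) : ℤ) := by
          have heq : ((3 * d : ℕ) : ℤ) =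
              (n:ℤ) + 2 * ((a:ℕ):ℤ) - 2 * (((e + a : ℕ) : ℤ) - 2 * p - 1) := by
            push_cast
            omega
          rw [heq]
          exact dvd_sub (dvd_add hN (hA.mul_left 2)) h2x
        have h3' : q ∣ 3 * d := by exact_mod_cast h3
        rcases (Nat.Prime.dvd_mul hq).mp h3' with h | h
        · have hq3 : q = 3 := (Nat.prime_dvd_prime_iff_eq hq Nat.prime_three).mp h
          subst hq3
          exact hcad 3 hq hqa (h3d hqn)
        · exact hqd h
      · have hD : (q:ℤ) ∣ ((d:ℕ):ℤ) := Int.natCast_dvd_natCast.mpr hqd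
        have h2a : (q:ℤ) ∣ ((2 * a : ℕ) : ℤ) := by
          have heq : ((2 * a : ℕ) : ℤ) =
              2 * (((e + a : ℕ) : ℤ) - 2 * p - 1) - (n:ℤ) + 3 * ((d:ℕ):ℤ) := by
            push_cast
            omega
          rw [heq]
          exact dvd_add (dvd_sub h2x hN) (hD.mul_left 3)
        have h2a' : q ∣ 2 * a := by exact_mod_cast h2a
        have hqa : q ∣ a := by
          rcases (Nat.Prime.dvd_mul hq).mp h2a' with h | h
          · exact absurd ((Nat.prime_dvd_prime_iff_eq hq Nat.prime_two).mp h) hq2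
          · exact h
        exact hcad q hq hqa hqd
    · apply int_gcd_one _ _ hn0
      intro q hq hqn hdvd
      have hq2 := hqodd q hqn
      have hN : (q:ℤ) ∣ (n:ℤ) := Int.natCast_dvd_natCast.mpr hqn
      have h2x : (q:ℤ) ∣ 2 * ((n:ℤ) - 1 - ((e + a : ℕ) : ℤ) - 2 * p) := hdvd.mul_left 2
      -- 2x = n - d - 2a
      rcases hsplit q hq hqn with ⟨hqa, hqd⟩ | hqd
      · have hA : (q:ℤ) ∣ ((a:ℕ):ℤ) := Int.natCast_dvd_natCast.mpr hqa
        have hD : (q:ℤ) ∣ ((d:ℕ):ℤ) := by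
          have heq : ((d:ℕ):ℤ) =
              (n:ℤ) - 2 * ((a:ℕ):ℤ) - 2 * ((n:ℤ) - 1 - ((e + a : ℕ) : ℤ) - 2 * p) := by
            push_cast
            omega
          rw [heq]
          exact dvd_sub (dvd_sub hN (hA.mul_left 2)) h2x
        exact hqd (by exact_mod_cast hD)
      · have hD : (q:ℤ) ∣ ((d:ℕ):ℤ) := Int.natCast_dvd_natCast.mpr hqd
        have h2a : (q:ℤ) ∣ ((2 * a : ℕ) : ℤ) := by
          have heq : ((2 * a : ℕ) : ℤ) =
              (n:ℤ) - ((d:ℕ):ℤ) - 2 * ((n:ℤ) - 1 - ((e + a : ℕ) : ℤ) - 2 * p) := by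
            push_cast
            omega
          rw [heq]
          exact dvd_sub (dvd_sub hN hD) h2x
        have h2a' : q ∣ 2 * a := by exact_mod_cast h2a
        have hqa : q ∣ a := by
          rcases (Nat.Prime.dvd_mul hq).mp h2a' with h | h
          · exact absurd ((Nat.prime_dvd_prime_iff_eq hq Nat.prime_two).mp h) hq2
          · exact h
        exact hcad q hq hqa hqd
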